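/- For every finite graph G with at least one vertex, α(G) ≥ 2|V(G)| / (ω(G) + Δ(G) + 1). -/

import Mathlib

open SimpleGraph Finset

/-- The independence number of `G`: the clique number of the complement. -/
noncomputable def indepNum {V : Type*} (G : SimpleGraph V) : ℕ := Gᶜ.cliqueNum

/-- Fajtlowicz's bound: every graph satisfies `α(G) ≥ 2|V(G)| / (ω(G) + Δ(G) + 1)`. -/
theorem fajtlowicz {V : Type*} [Fintype V] [DecidableEq V] [Nonempty V]
    (G : SimpleGraph V) [DecidableRel G.Adj] :
    (_root_.indepNum G : ℚ) ≥
      2 * (Fintype.card V : ℚ) / ((G.cliqueNum : ℚ) + (G.maxDegree : ℚ) + 1) := by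
  classical
  obtain ⟨I, hI⟩ := (Gᶜ).exists_isNClique_cliqueNum
  have hIcard : I.card = _root_.indepNum G := hI.card_eq
  have hbound : ∀ J : Finset V, (Gᶜ).IsClique (J : Set V) → J.card ≤ _root_.indepNum G :=
    fun J hJ => IsClique.card_le_cliqueNum (tc := hJ)
  have hIind : ∀ u ∈ I, ∀ v ∈ I, u ≠ v → ¬ G.Adj u v := by
    intro u hu v hv huv
    exact ((G.compl_adj u v).mp (hI.isClique (by simpa using hu) (by simpa using hv) huv)).2
  set nI : V → Finset V := fun v => I.filter (fun u => G.Adj v u) with hnI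
  have hmem_nI : ∀ v u, u ∈ nI v ↔ u ∈ I ∧ G.Adj v u := by
    intro v u; simp [hnI]
  -- every vertex outside I has a neighbor in I
  have h1 : ∀ v ∈ Iᶜ, 1 ≤ (nI v).card := by
    intro v hv
    rw [Finset.mem_compl] at hv
    by_contra h
    have hempty : nI v = ∅ := by
      rw [← Finset.card_eq_zero]; omega
    have hJ : (Gᶜ).IsClique ((insert v I : Finset V) : Set V) := by
      rw [Finset.coe_insert]
      refine hI.isClique.insert ?_
      intro b hb hvb
      refine (G.compl_adj v b).mpr ⟨hvb, fun hadj => ?_⟩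
      have : b ∈ nI v := (hmem_nI v b).mpr ⟨by simpa using hb, hadj⟩
      simp [hempty] at this
    have hcard : (insert v I).card = _root_.indepNum G + 1 := by
      rw [Finset.card_insert_of_notMem hv, hIcard]
    have := hbound _ hJ
    omega
  set f : V → V := fun v => if h : (nI v).Nonempty then h.choose else Classical.arbitrary V
    with hfdef
  have hf : ∀ v, (nI v).card = 1 → nI v = {f v} := by
    intro v hv
    have hne : (nI v).Nonempty := Finset.card_pos.mp (by omega)
    have hmem : f v ∈ nI v := by
      rw [hfdef]; simp only [dif_pos hne]; exact hne.choose_spec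
    obtain ⟨u, hu⟩ := Finset.card_eq_one.mp hv
    rw [hu] at hmem ⊢
    rw [Finset.mem_singleton] at hmem
    rw [hmem]
  set P : Finset V := Iᶜ.filter (fun v => (nI v).card = 1) with hPdef
  have hPmem : ∀ v ∈ P, v ∉ I ∧ nI v = {f v} := by
    intro v hv
    rw [hPdef, Finset.mem_filter, Finset.mem_compl] at hv
    exact ⟨hv.1, hf v hv.2⟩
  have hfP : ∀ v ∈ P, f v ∈ I ∧ G.Adj v (f v) := by
    intro v hv
    have h2 := (hPmem v hv).2
    have : f v ∈ nI v := by rw [h2]; exact Finset.mem_singleton_self _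
    exact (hmem_nI v (f v)).mp this
  have hnadj : ∀ v ∈ P, ∀ z ∈ I, z ≠ f v → ¬ G.Adj v z := by
    intro v hv z hz hzf hadj
    have : z ∈ nI v := (hmem_nI v z).mpr ⟨hz, hadj⟩
    rw [(hPmem v hv).2, Finset.mem_singleton] at this
    exact hzf this
  -- key claim: two private neighbors of the same u are adjacent
  have hkey : ∀ u ∈ I, ∀ v ∈ P, f v = u → ∀ w ∈ P, f w = u → v ≠ w → G.Adj v w := by
    intro u hu v hv hfv w hw hfw hvw
    by_contra hadj
    set J : Finset V := insert v (insert w (I.erase u)) with hJdef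
    have hvI : v ∉ I := (hPmem v hv).1
    have hwI : w ∉ I := (hPmem w hw).1
    have hJclique : (Gᶜ).IsClique (J : Set V) := by
      intro x hx y hy hxy
      simp only [hJdef, Finset.coe_insert, Set.mem_insert_iff, Finset.mem_coe,
        Finset.mem_erase] at hx hy
      have hvadj : ∀ z, z ≠ u ∧ z ∈ I → (Gᶜ).Adj v z := by
        intro z ⟨hzu, hz⟩
        exact (G.compl_adj v z).mpr ⟨fun h => hvI (h ▸ hz),
          hnadj v hv z hz (by rw [hfv]; exact hzu)⟩
      have hwadj : ∀ z, z ≠ u ∧ z ∈ I → (Gᶜ).Adj w z := by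
        intro z ⟨hzu, hz⟩
        exact (G.compl_adj w z).mpr ⟨fun h => hwI (h ▸ hz),
          hnadj w hw z hz (by rw [hfw]; exact hzu)⟩
      have hvw' : (Gᶜ).Adj v w := (G.compl_adj v w).mpr ⟨hvw, hadj⟩
      rcases hx with rfl | rfl | hx
      · rcases hy with rfl | rfl | hy
        · exact absurd rfl hxy
        · exact hvw'
        · exact hvadj y hy
      · rcases hy with rfl | rfl | hy
        · exact hvw'.symm
        · exact absurd rfl hxy
        · exact hwadj y hy
      · rcases hy with rfl | rfl | hy
        · exact (hvadj x hx).symm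
        · exact (hwadj x hx).symm
        · exact (G.compl_adj x y).mpr ⟨hxy, hIind x hx.2 y hy.2 hxy⟩
    have hwmem : w ∉ I.erase u := fun h => hwI (Finset.mem_of_mem_erase h)
    have hvmem : v ∉ insert w (I.erase u) := by
      simp only [Finset.mem_insert]
      rintro (rfl | h)
      · exact hvw rfl
      · exact hvI (Finset.mem_of_mem_erase h)
    have hIpos : 1 ≤ I.card := Finset.card_pos.mpr ⟨u, hu⟩
    have hJcard : J.card = _root_.indepNum G + 1 := by
      rw [hJdef, Finset.card_insert_of_notMem hvmem, Finset.card_insert_of_notMem hwmem,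
        Finset.card_erase_of_mem hu, hIcard]
      omega
    have := hbound J hJclique
    omega
  -- clique number is at least 1
  have homega1 : 1 ≤ G.cliqueNum := by
    obtain ⟨x⟩ := ‹Nonempty V›
    have : ({x} : Finset V).card ≤ G.cliqueNum :=
      IsClique.card_le_cliqueNum (tc := by simp [SimpleGraph.isClique_iff])
    simpa using this
  -- fiber bound: each u ∈ I has at most ω - 1 private neighbors
  have hfiber : ∀ u ∈ I, (P.filter (fun v => f v = u)).card + 1 ≤ G.cliqueNum := by
    intro u hu
    set F := P.filter (fun v => f v = u) with hFdef
    have hclique : G.IsClique ((insert u F : Finset V) : Set V) := by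
      intro x hx y hy hxy
      simp only [Finset.coe_insert, Set.mem_insert_iff, Finset.mem_coe, hFdef,
        Finset.mem_filter] at hx hy
      rcases hx with rfl | ⟨hxP, hxf⟩
      · rcases hy with rfl | ⟨hyP, hyf⟩
        · exact absurd rfl hxy
        · exact (hyf ▸ (hfP y hyP).2).symm
      · rcases hy with rfl | ⟨hyP, hyf⟩
        · exact hxf ▸ (hfP x hxP).2
        · exact hkey u hu x hxP hxf y hyP hyf hxy
    have huF : u ∉ F := by
      rw [hFdef]
      intro h
      exact (hPmem u (Finset.mem_of_mem_filter _ h)).1 hu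
    have := IsClique.card_le_cliqueNum (G := G) (tc := hclique)
    rw [Finset.card_insert_of_notMem huF] at this
    exact this
  -- P.card ≤ I.card * (ω - 1)
  have hPcard : P.card ≤ I.card * (G.cliqueNum - 1) := by
    have hmaps : ∀ v ∈ P, f v ∈ I := fun v hv => (hfP v hv).1
    rw [Finset.card_eq_sum_card_fiberwise hmaps]
    calc ∑ u ∈ I, (P.filter (fun v => f v = u)).card
        ≤ ∑ u ∈ I, (G.cliqueNum - 1) := by
          refine Finset.sum_le_sum fun u hu => ?_
          have := hfiber u hu
          omega
      _ = I.card * (G.cliqueNum - 1) := by rw [Finset.sum_const, smul_eq_mul]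
  -- total edge count: ∑_{v ∉ I} |N(v) ∩ I| ≤ |I| * Δ
  have hS : ∑ v ∈ Iᶜ, (nI v).card ≤ I.card * G.maxDegree := by
    have hswap : ∑ v ∈ Iᶜ, (nI v).card
        = ∑ u ∈ I, (Iᶜ.filter (fun v => G.Adj v u)).card := by
      simp only [hnI, Finset.card_filter]
      rw [Finset.sum_comm]
    rw [hswap]
    calc ∑ u ∈ I, (Iᶜ.filter (fun v => G.Adj v u)).card
        ≤ ∑ u ∈ I, G.maxDegree := by
          refine Finset.sum_le_sum fun u hu => ?_
          refine le_trans (Finset.card_le_card ?_) (G.degree_le_maxDegree u)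
          intro v hv
          rw [Finset.mem_filter] at hv
          rw [SimpleGraph.mem_neighborFinset]
          exact hv.2.symm
      _ = I.card * G.maxDegree := by rw [Finset.sum_const, smul_eq_mul]
  -- lower bound on the edge count
  have hSlow : 2 * Iᶜ.card ≤ P.card + ∑ v ∈ Iᶜ, (nI v).card := by
    have hsplit : ∑ v ∈ Iᶜ, (nI v).card
        = ∑ v ∈ P, (nI v).card + ∑ v ∈ Iᶜ.filter (fun v => ¬ (nI v).card = 1), (nI v).card := by
      rw [hPdef, Finset.sum_filter_add_sum_filter_not]
    have hPsum : ∑ v ∈ P, (nI v).card = P.card := by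
      rw [Finset.card_eq_sum_ones P]
      refine Finset.sum_congr rfl fun v hv => ?_
      rw [hPdef, Finset.mem_filter] at hv
      exact hv.2
    have hQsum : 2 * (Iᶜ.filter (fun v => ¬ (nI v).card = 1)).card
        ≤ ∑ v ∈ Iᶜ.filter (fun v => ¬ (nI v).card = 1), (nI v).card := by
      rw [Finset.card_eq_sum_ones, Finset.mul_sum]
      refine Finset.sum_le_sum fun v hv => ?_
      rw [Finset.mem_filter] at hv
      have := h1 v hv.1
      omega
    have hcardsplit : Iᶜ.card = P.card + (Iᶜ.filter (fun v => ¬ (nI v).card = 1)).card := by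
      rw [hPdef, Finset.card_filter_add_card_filter_not]
    omega
  -- main natural-number inequality
  have hmain : 2 * Fintype.card V ≤ _root_.indepNum G * (G.cliqueNum + G.maxDegree + 1) := by
    have hcardV : I.card + Iᶜ.card = Fintype.card V := by
      rw [Finset.card_add_card_compl]
    obtain ⟨k, hk⟩ : ∃ k, G.cliqueNum = k + 1 := ⟨G.cliqueNum - 1, by omega⟩
    rw [hk] at hPcard ⊢
    simp only [Nat.add_sub_cancel] at hPcard
    have h2 : 2 * Iᶜ.card ≤ I.card * k + I.card * G.maxDegree := by omega
    have : 2 * Fintype.card V ≤ I.card * (k + 1 + G.maxDegree + 1) := by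
      have : I.card * (k + 1 + G.maxDegree + 1) = I.card * k + I.card * G.maxDegree
          + 2 * I.card := by ring
      omega
    rw [hIcard] at this
    exact this
  -- conclude over ℚ
  have hden : (0 : ℚ) < (G.cliqueNum : ℚ) + (G.maxDegree : ℚ) + 1 := by positivity
  rw [ge_iff_le, div_le_iff₀ hden]
  exact_mod_cast hmain
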